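/- If there exists a counterexample trace for a phase structure S, transition system TS, and property P — that is, a trace σ₀,…,σₙ of TS with a valuation v and matching phase trace q₀ = ι,…,qₙ such that either some σᵢ ∉ P v, or some σᵢ has a TR-successor σ' with (σᵢ,σ') ∉ δ qᵢ q' v for every q' — then no assignment of phase characterizations φ over the structure S yields a safe inductive phase automaton with respect to TS and P. -/
import Mathlib


/-- A counterexample trace implies no safe inductive phase automaton exists
    over the given phase structure. -/
theorem counterexample_trace_implies_no_safe_inductive_automaton
    {S V Q : Type*}
    (Init : Set S) (TR : Set (S × S)) (ι : Q)
    (δ : Q → Q → V → Set (S × S)) (P : V → Set S)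
    (n : ℕ) (σ : ℕ → S) (v : V) (qs : ℕ → Q)
    (h0 : σ 0 ∈ Init) (hstep : ∀ i < n, (σ i, σ (i + 1)) ∈ TR)
    (hq0 : qs 0 = ι)
    (hmatch : ∀ i < n, (σ i, σ (i + 1)) ∈ δ (qs i) (qs (i + 1)) v)
    (hviol :
      (∃ i ≤ n, σ i ∉ P v) ∨
      (∃ i ≤ n, ∃ σ' : S, (σ i, σ') ∈ TR ∧ ∀ q' : Q, (σ i, σ') ∉ δ (qs i) q' v)) :
    ¬ ∃ φ : Q → V → Set S,
        (∀ v', Init ⊆ φ ι v') ∧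
        (∀ q p v' s s', s ∈ φ q v' → (s, s') ∈ δ q p v' → s' ∈ φ p v') ∧
        (∀ q v' s s', s ∈ φ q v' → (s, s') ∈ TR → ∃ p, (s, s') ∈ δ q p v') ∧
        (∀ q v', φ q v' ⊆ P v') := by
  rintro ⟨φ, hinit, hind, htot, hsafe⟩
  have hmem : ∀ i ≤ n, σ i ∈ φ (qs i) v := by
    intro i hi
    induction i with
    | zero => rw [hq0]; exact hinit v h0
    | succ k ih =>
      have hk : k < n := hi
      exact hind (qs k) (qs (k+1)) v _ _ (ih (le_of_lt hk)) (hmatch k hk)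
  rcases hviol with ⟨i, hi, hP⟩ | ⟨i, hi, σ', hTR, hδ⟩
  · exact hP (hsafe (qs i) v (hmem i hi))
  · obtain ⟨p, hp⟩ := htot (qs i) v _ _ (hmem i hi) hTR
    exact hδ p hp
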